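/- Stein's lemma for Gaussian smoothing: Let σ > 0 and let F : ℝᵈ → ℝ be a bounded measurable function. Define G(x) = E_{δ ~ N(0, σ² I_d)}[F(x + δ)]. Then G is differentiable and for every x ∈ ℝᵈ, ∇G(x) = E_{δ ~ N(0, σ² I_d)}[(δ/σ²) · F(x + δ)]. -/

import Mathlib

open MeasureTheory Real
open scoped NNReal ENNReal

/-- The `d`-dimensional isotropic Gaussian measure `N(0, σ² I_d)`, with density
`(2πσ²)^{-d/2} exp(-‖t‖²/(2σ²))` with respect to Lebesgue measure. -/
noncomputable def isoGaussian (d : ℕ) (σ : ℝ) : Measure (EuclideanSpace ℝ (Fin d)) :=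
  volume.withDensity fun t =>
    ENNReal.ofReal ((2 * π * σ ^ 2) ^ (-(d : ℝ) / 2) * Real.exp (-‖t‖ ^ 2 / (2 * σ ^ 2)))

/-- The density of `isoGaussian` as a real-valued function. -/
noncomputable def gaussDensity (d : ℕ) (σ : ℝ) (t : EuclideanSpace ℝ (Fin d)) : ℝ :=
  (2 * π * σ ^ 2) ^ (-(d : ℝ) / 2) * Real.exp (-‖t‖ ^ 2 / (2 * σ ^ 2))

lemma gaussDensity_nonneg (d : ℕ) (σ : ℝ) (t : EuclideanSpace ℝ (Fin d)) :
    0 ≤ gaussDensity d σ t :=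
  mul_nonneg (Real.rpow_nonneg (by positivity) _) (Real.exp_nonneg _)

lemma gaussDensity_continuous (d : ℕ) (σ : ℝ) : Continuous (gaussDensity d σ) := by
  unfold gaussDensity
  fun_prop

/-- Integrals against `isoGaussian` are weighted Lebesgue integrals. -/
lemma isoGaussian_integral_eq {d : ℕ} {σ : ℝ}
    {V : Type*} [NormedAddCommGroup V] [NormedSpace ℝ V]
    (g : EuclideanSpace ℝ (Fin d) → V) :
    ∫ t, g t ∂(isoGaussian d σ) = ∫ t, gaussDensity d σ t • g t := by
  have hmeas : Measurable fun t : EuclideanSpace ℝ (Fin d) =>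
      Real.toNNReal (gaussDensity d σ t) :=
    (continuous_real_toNNReal.comp (gaussDensity_continuous d σ)).measurable
  have h2 : isoGaussian d σ
      = volume.withDensity fun t => ((Real.toNNReal (gaussDensity d σ t) : ℝ≥0) : ℝ≥0∞) := rfl
  rw [h2, integral_withDensity_eq_integral_smul hmeas g]
  congr 1
  ext t
  rw [NNReal.smul_def, Real.coe_toNNReal _ (gaussDensity_nonneg d σ t)]

/-- Integrability of the Gaussian `exp (-b‖t‖²)` on Euclidean space. -/
lemma integrable_exp_gauss {d : ℕ} {b : ℝ} (hb : 0 < b) :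
    Integrable (fun t : EuclideanSpace ℝ (Fin d) => Real.exp (-b * ‖t‖ ^ 2)) := by
  have h := (GaussianFourier.integrable_cexp_neg_mul_sq_norm_add
    (V := EuclideanSpace ℝ (Fin d)) (b := (b : ℂ)) (by simpa using hb) 0 0).norm
  refine h.congr (Filter.Eventually.of_forall fun t => ?_)
  simp only [Complex.norm_exp]
  norm_num
  left
  rw [← Complex.ofReal_pow, Complex.ofReal_re]

/-- Integrability of `(‖t‖ + 1) exp (-b‖t‖²)` on Euclidean space. -/
lemma integrable_norm_gauss {d : ℕ} {b : ℝ} (hb : 0 < b) :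
    Integrable (fun t : EuclideanSpace ℝ (Fin d) => (‖t‖ + 1) * Real.exp (-b * ‖t‖ ^ 2)) := by
  have hb2 : 0 < b / 2 := by positivity
  refine ((integrable_exp_gauss (d := d) hb2).const_mul (max 1 (2 / b) + 1)).mono'
    ?_ (Filter.Eventually.of_forall fun t => ?_)
  · exact ((continuous_norm.add continuous_const).mul
      (Real.continuous_exp.comp
        (continuous_const.mul (continuous_norm.pow 2)))).aestronglyMeasurable
  · have hr0 : (0:ℝ) ≤ ‖t‖ := norm_nonneg t
    set r := ‖t‖ with hr
    have hexp1 : (1:ℝ) ≤ Real.exp (b / 2 * r ^ 2) := Real.one_le_exp (by positivity)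
    have hM : (1:ℝ) ≤ max 1 (2 / b) := le_max_left _ _
    have hM2 : 2 / b ≤ max 1 (2 / b) := le_max_right _ _
    have h1 : r ≤ max 1 (2 / b) * Real.exp (b / 2 * r ^ 2) := by
      rcases le_total r 1 with h | h
      · nlinarith
      · have h2 : b / 2 * r ^ 2 ≤ Real.exp (b / 2 * r ^ 2) := by
          linarith [Real.add_one_le_exp (b / 2 * r ^ 2)]
        have h4 : r ^ 2 ≤ 2 / b * Real.exp (b / 2 * r ^ 2) := by
          have h4' := mul_le_mul_of_nonneg_left h2 (by positivity : (0:ℝ) ≤ 2 / b)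
          have hfix : 2 / b * (b / 2 * r ^ 2) = r ^ 2 := by
            field_simp
          linarith
        have h5 : 2 / b * Real.exp (b / 2 * r ^ 2)
            ≤ max 1 (2 / b) * Real.exp (b / 2 * r ^ 2) :=
          mul_le_mul_of_nonneg_right hM2 (Real.exp_nonneg _)
        nlinarith
    have hkey : r + 1 ≤ (max 1 (2 / b) + 1) * Real.exp (b / 2 * r ^ 2) := by nlinarith
    rw [Real.norm_of_nonneg (by positivity)]
    have e1 : (0:ℝ) ≤ Real.exp (-b * r ^ 2) := Real.exp_nonneg _
    calc (r + 1) * Real.exp (-b * r ^ 2)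
        ≤ (max 1 (2 / b) + 1) * Real.exp (b / 2 * r ^ 2) * Real.exp (-b * r ^ 2) :=
          mul_le_mul_of_nonneg_right hkey e1
      _ = (max 1 (2 / b) + 1) * Real.exp (-(b / 2) * r ^ 2) := by
          rw [mul_assoc, ← Real.exp_add]
          congr 2
          ring

lemma integrable_gaussDensity {d : ℕ} {σ : ℝ} (hσ : 0 < σ) :
    Integrable (gaussDensity d σ) := by
  have hb : (0:ℝ) < (2 * σ ^ 2)⁻¹ := by positivity
  have h := (integrable_exp_gauss (d := d) hb).const_mul ((2 * π * σ ^ 2) ^ (-(d : ℝ) / 2))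
  refine h.congr (Filter.Eventually.of_forall fun t => ?_)
  show (2 * π * σ ^ 2) ^ (-(d : ℝ) / 2) * Real.exp (-(2 * σ ^ 2)⁻¹ * ‖t‖ ^ 2) = _
  unfold gaussDensity
  congr 1
  rw [Real.exp_eq_exp]
  ring

open InnerProductSpace

/-- Derivative in `z` of `gaussDensity d σ (y - z)`. -/
lemma hasFDerivAt_gaussDensity_shift {d : ℕ} {σ : ℝ} (hσ : 0 < σ)
    (y x' : EuclideanSpace ℝ (Fin d)) :
    HasFDerivAt (fun z => gaussDensity d σ (y - z))
      ((gaussDensity d σ (y - x') * (σ ^ 2)⁻¹) •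
        (toDual ℝ (EuclideanSpace ℝ (Fin d)) (y - x') :
          EuclideanSpace ℝ (Fin d) →L[ℝ] ℝ)) x' := by
  have hσ0 : σ ≠ 0 := ne_of_gt hσ
  have h1 : HasFDerivAt (fun z : EuclideanSpace ℝ (Fin d) => y - z)
      (-(ContinuousLinearMap.id ℝ (EuclideanSpace ℝ (Fin d)))) x' := by
    simpa using (hasFDerivAt_id x').const_sub y
  have h2 := h1.norm_sq
  have h3 := (h2.const_mul (-(2 * σ ^ 2)⁻¹)).exp
  have h4 := h3.const_mul ((2 * π * σ ^ 2) ^ (-(d : ℝ) / 2))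
  have hfun : (fun z : EuclideanSpace ℝ (Fin d) =>
        (2 * π * σ ^ 2) ^ (-(d : ℝ) / 2) * Real.exp (-(2 * σ ^ 2)⁻¹ * ‖y - z‖ ^ 2))
      = fun z => gaussDensity d σ (y - z) := by
    funext z
    unfold gaussDensity
    congr 1
    rw [Real.exp_eq_exp]
    ring
  have hgd : gaussDensity d σ (y - x')
      = (2 * π * σ ^ 2) ^ (-(d : ℝ) / 2) * Real.exp (-(2 * σ ^ 2)⁻¹ * ‖y - x'‖ ^ 2) := by
    unfold gaussDensity
    congr 1
    rw [Real.exp_eq_exp]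
    ring
  rw [← hfun]
  refine h4.congr_fderiv ?_
  refine ContinuousLinearMap.ext fun h => ?_
  have hN : ((2 : ℕ) • ((innerSL ℝ) (y - x')).comp
      (-(ContinuousLinearMap.id ℝ (EuclideanSpace ℝ (Fin d))))) h
      = -(2 * (inner ℝ (y - x') h : ℝ)) := by
    rw [two_smul]
    simp only [ContinuousLinearMap.add_apply, ContinuousLinearMap.coe_comp',
      Function.comp_apply, ContinuousLinearMap.neg_apply, ContinuousLinearMap.coe_id',
      id_eq, innerSL_apply_apply, inner_neg_right]
    ring
  simp only [ContinuousLinearMap.smul_apply, toDual_apply_apply, smul_eq_mul, hN, hgd]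
  field_simp

/-- The pointwise derivative appearing in Stein's lemma. -/
noncomputable def steinDeriv (d : ℕ) (σ : ℝ) (F : EuclideanSpace ℝ (Fin d) → ℝ)
    (x' y : EuclideanSpace ℝ (Fin d)) : EuclideanSpace ℝ (Fin d) →L[ℝ] ℝ :=
  (F y * gaussDensity d σ (y - x') * (σ ^ 2)⁻¹) •
    (toDual ℝ (EuclideanSpace ℝ (Fin d)) (y - x') : EuclideanSpace ℝ (Fin d) →L[ℝ] ℝ)

/-- Stein's lemma for Gaussian smoothing: for `σ > 0` and a bounded
measurable `F : ℝᵈ → ℝ`, the smoothed function `G(x) = E_{δ ~ N(0,σ²I_d)}[F(x + δ)]`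
is differentiable with gradient `∇G(x) = E_{δ ~ N(0,σ²I_d)}[(δ/σ²) F(x + δ)]`. -/
theorem stein_lemma_gaussian_smoothing (d : ℕ) (σ : ℝ) (hσ : 0 < σ)
    (F : EuclideanSpace ℝ (Fin d) → ℝ) (hF : Measurable F)
    (hFbd : ∃ C : ℝ, ∀ x, |F x| ≤ C)
    (G : EuclideanSpace ℝ (Fin d) → ℝ)
    (hG : ∀ x, G x = ∫ δ, F (x + δ) ∂(isoGaussian d σ)) :
    ∀ x : EuclideanSpace ℝ (Fin d),
      HasGradientAt G (∫ δ, F (x + δ) • ((σ ^ 2)⁻¹ • δ) ∂(isoGaussian d σ)) x := by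
  classical
  obtain ⟨C, hC⟩ := hFbd
  have hC0 : 0 ≤ C := le_trans (abs_nonneg _) (hC 0)
  have hσ2 : (0 : ℝ) < σ ^ 2 := by positivity
  intro x
  rw [hasGradientAt_iff_hasFDerivAt]
  -- rewrite G as a shifted Lebesgue integral
  have hGeq : G = fun x' : EuclideanSpace ℝ (Fin d) =>
      ∫ y : EuclideanSpace ℝ (Fin d), F y * gaussDensity d σ (y - x') := by
    funext x'
    rw [hG x', isoGaussian_integral_eq]
    rw [← integral_add_left_eq_self
      (fun y : EuclideanSpace ℝ (Fin d) => F y * gaussDensity d σ (y - x')) x']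
    congr 1
    ext δ
    simp only [add_sub_cancel_left, smul_eq_mul]
    ring
  -- the pointwise derivative
  have hΦ'deriv : ∀ y x' : EuclideanSpace ℝ (Fin d),
      HasFDerivAt (fun z => F y * gaussDensity d σ (y - z)) (steinDeriv d σ F x' y) x' := by
    intro y x'
    have h := (hasFDerivAt_gaussDensity_shift hσ y x').const_mul (F y)
    rw [smul_smul, ← mul_assoc] at h
    exact h
  -- norm of the derivative
  have hΦ'norm : ∀ x' y : EuclideanSpace ℝ (Fin d),
      ‖steinDeriv d σ F x' y‖ = |F y| * gaussDensity d σ (y - x') * (σ ^ 2)⁻¹ * ‖y - x'‖ := by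
    intro x' y
    have h : ‖(F y * gaussDensity d σ (y - x') * (σ ^ 2)⁻¹) •
        (toDual ℝ (EuclideanSpace ℝ (Fin d)) (y - x') : EuclideanSpace ℝ (Fin d) →L[ℝ] ℝ)‖
        = |F y| * gaussDensity d σ (y - x') * (σ ^ 2)⁻¹ * ‖y - x'‖ := by
      rw [norm_smul, Real.norm_eq_abs, abs_mul, abs_mul,
        abs_of_nonneg (gaussDensity_nonneg d σ _), abs_of_nonneg (le_of_lt (inv_pos.mpr hσ2)),
        (toDual ℝ (EuclideanSpace ℝ (Fin d))).norm_map]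
    exact h
  -- the bound
  have hb_est : ∀ y : EuclideanSpace ℝ (Fin d), ∀ x' ∈ Metric.ball x 1, ‖steinDeriv d σ F x' y‖ ≤
      (C * (2 * π * σ ^ 2) ^ (-(d : ℝ) / 2) * (σ ^ 2)⁻¹ * Real.exp ((2 * σ ^ 2)⁻¹)) *
        ((‖y - x‖ + 1) * Real.exp (-(4 * σ ^ 2)⁻¹ * ‖y - x‖ ^ 2)) := by
    intro y x' hx'
    have hxx' : ‖x' - x‖ < 1 := by
      rw [← dist_eq_norm]
      exact Metric.mem_ball.mp hx'
    have htri2 : ‖y - x'‖ ≤ ‖y - x‖ + 1 := by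
      have h2 : y - x' = (y - x) + (x - x') := by abel
      rw [h2]
      calc ‖(y - x) + (x - x')‖ ≤ ‖y - x‖ + ‖x - x'‖ := norm_add_le _ _
        _ ≤ ‖y - x‖ + 1 := by
            rw [norm_sub_rev x x']
            linarith
    have htri1 : ‖y - x‖ ≤ ‖y - x'‖ + 1 := by
      have h2 : y - x = (y - x') + (x' - x) := by abel
      rw [h2]
      calc ‖(y - x') + (x' - x)‖ ≤ ‖y - x'‖ + ‖x' - x‖ := norm_add_le _ _
        _ ≤ ‖y - x'‖ + 1 := by linarith
    have hsq : ‖y - x‖ ^ 2 / 2 - 1 ≤ ‖y - x'‖ ^ 2 := by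
      nlinarith [norm_nonneg (y - x'), norm_nonneg (y - x), sq_nonneg (‖y - x'‖ - 1)]
    have h2σ : (0:ℝ) < 2 * σ ^ 2 := by positivity
    have hexp : Real.exp (-‖y - x'‖ ^ 2 / (2 * σ ^ 2))
        ≤ Real.exp ((2 * σ ^ 2)⁻¹) * Real.exp (-(4 * σ ^ 2)⁻¹ * ‖y - x‖ ^ 2) := by
      rw [← Real.exp_add]
      apply Real.exp_le_exp.mpr
      rw [← sub_nonneg]
      have hid : (2 * σ ^ 2)⁻¹ + -(4 * σ ^ 2)⁻¹ * ‖y - x‖ ^ 2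
          - -‖y - x'‖ ^ 2 / (2 * σ ^ 2)
          = (1 - ‖y - x‖ ^ 2 / 2 + ‖y - x'‖ ^ 2) / (2 * σ ^ 2) := by
        field_simp
        ring
      rw [hid]
      apply div_nonneg _ h2σ.le
      linarith
    rw [hΦ'norm x' y]
    have hgd : gaussDensity d σ (y - x')
        = (2 * π * σ ^ 2) ^ (-(d : ℝ) / 2) * Real.exp (-‖y - x'‖ ^ 2 / (2 * σ ^ 2)) := rfl
    rw [hgd]
    calc |F y| * ((2 * π * σ ^ 2) ^ (-(d : ℝ) / 2) * Real.exp (-‖y - x'‖ ^ 2 / (2 * σ ^ 2)))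
          * (σ ^ 2)⁻¹ * ‖y - x'‖
        ≤ C * ((2 * π * σ ^ 2) ^ (-(d : ℝ) / 2) *
            (Real.exp ((2 * σ ^ 2)⁻¹) * Real.exp (-(4 * σ ^ 2)⁻¹ * ‖y - x‖ ^ 2)))
            * (σ ^ 2)⁻¹ * (‖y - x‖ + 1) := by
          gcongr
          exact hC y
      _ = (C * (2 * π * σ ^ 2) ^ (-(d : ℝ) / 2) * (σ ^ 2)⁻¹ * Real.exp ((2 * σ ^ 2)⁻¹)) *
            ((‖y - x‖ + 1) * Real.exp (-(4 * σ ^ 2)⁻¹ * ‖y - x‖ ^ 2)) := by ring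
  have hbound_int : Integrable (fun y : EuclideanSpace ℝ (Fin d) =>
      (C * (2 * π * σ ^ 2) ^ (-(d : ℝ) / 2) * (σ ^ 2)⁻¹ * Real.exp ((2 * σ ^ 2)⁻¹)) *
        ((‖y - x‖ + 1) * Real.exp (-(4 * σ ^ 2)⁻¹ * ‖y - x‖ ^ 2))) := by
    have h1 : Integrable (fun t : EuclideanSpace ℝ (Fin d) =>
        (‖t‖ + 1) * Real.exp (-(4 * σ ^ 2)⁻¹ * ‖t‖ ^ 2)) :=
      integrable_norm_gauss (by positivity)
    exact (h1.comp_sub_right x).const_mul _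
  -- measurability facts
  have hmeasΦ : ∀ x' : EuclideanSpace ℝ (Fin d),
      AEStronglyMeasurable (fun y => F y * gaussDensity d σ (y - x'))
        (volume : Measure (EuclideanSpace ℝ (Fin d))) := by
    intro x'
    exact (hF.mul ((gaussDensity_continuous d σ).measurable.comp
      (measurable_id.sub measurable_const))).aestronglyMeasurable
  have hΦ'meas : AEStronglyMeasurable (steinDeriv d σ F x)
      (volume : Measure (EuclideanSpace ℝ (Fin d))) := by
    have hsc : AEStronglyMeasurable
        (fun y : EuclideanSpace ℝ (Fin d) =>
          F y * gaussDensity d σ (y - x) * (σ ^ 2)⁻¹) volume :=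
      ((hF.mul ((gaussDensity_continuous d σ).measurable.comp
        (measurable_id.sub measurable_const))).mul measurable_const).aestronglyMeasurable
    have hvec : AEStronglyMeasurable
        (fun y : EuclideanSpace ℝ (Fin d) =>
          (toDual ℝ (EuclideanSpace ℝ (Fin d)) (y - x) :
            EuclideanSpace ℝ (Fin d) →L[ℝ] ℝ)) volume := by
      apply Continuous.aestronglyMeasurable
      exact ((toDual ℝ (EuclideanSpace ℝ (Fin d))).continuous.comp
        (continuous_id.sub continuous_const))
    exact hsc.smul hvec
  -- integrability of Φ x
  have hint : Integrable (fun y : EuclideanSpace ℝ (Fin d) =>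
      F y * gaussDensity d σ (y - x)) := by
    have hg : Integrable (fun y : EuclideanSpace ℝ (Fin d) =>
        C * gaussDensity d σ (y - x)) :=
      ((integrable_gaussDensity (d := d) hσ).comp_sub_right x).const_mul C
    refine hg.mono' (hmeasΦ x) (Filter.Eventually.of_forall fun y => ?_)
    rw [Real.norm_eq_abs, abs_mul, abs_of_nonneg (gaussDensity_nonneg d σ _)]
    exact mul_le_mul_of_nonneg_right (hC y) (gaussDensity_nonneg d σ _)
  -- apply differentiation under the integral sign
  have key := hasFDerivAt_integral_of_dominated_of_fderiv_le
    (F := fun x' : EuclideanSpace ℝ (Fin d) =>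
      fun y : EuclideanSpace ℝ (Fin d) => F y * gaussDensity d σ (y - x'))
    (F' := steinDeriv d σ F) (x₀ := x)
    (bound := fun y =>
      (C * (2 * π * σ ^ 2) ^ (-(d : ℝ) / 2) * (σ ^ 2)⁻¹ * Real.exp ((2 * σ ^ 2)⁻¹)) *
        ((‖y - x‖ + 1) * Real.exp (-(4 * σ ^ 2)⁻¹ * ‖y - x‖ ^ 2)))
    (μ := (volume : Measure (EuclideanSpace ℝ (Fin d)))) (s := Metric.ball x 1) (Metric.ball_mem_nhds x one_pos)
    (Filter.Eventually.of_forall hmeasΦ) hint hΦ'meas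
    (Filter.Eventually.of_forall fun y x' hx' => hb_est y x' hx') hbound_int
    (Filter.Eventually.of_forall fun y x' _ => hΦ'deriv y x')
  rw [hGeq]
  -- integrability of the vector-valued integrand
  have hwint : Integrable (fun y : EuclideanSpace ℝ (Fin d) =>
      (F y * gaussDensity d σ (y - x) * (σ ^ 2)⁻¹) • (y - x)) := by
    refine hbound_int.mono' ?_ (Filter.Eventually.of_forall fun y => ?_)
    · have hsc : AEStronglyMeasurable
          (fun y : EuclideanSpace ℝ (Fin d) =>
            F y * gaussDensity d σ (y - x) * (σ ^ 2)⁻¹) volume :=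
        ((hF.mul ((gaussDensity_continuous d σ).measurable.comp
          (measurable_id.sub measurable_const))).mul measurable_const).aestronglyMeasurable
      exact hsc.smul ((continuous_id.sub continuous_const).aestronglyMeasurable)
    · rw [norm_smul, Real.norm_eq_abs, abs_mul, abs_mul,
        abs_of_nonneg (gaussDensity_nonneg d σ _),
        abs_of_nonneg (le_of_lt (inv_pos.mpr hσ2))]
      have h := hb_est y x (Metric.mem_ball_self one_pos)
      rw [hΦ'norm x y] at h
      exact h
  have hΦ'int : Integrable (steinDeriv d σ F x) := by
    refine hbound_int.mono' hΦ'meas (Filter.Eventually.of_forall fun y => ?_)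
    exact hb_est y x (Metric.mem_ball_self one_pos)
  -- identify the claimed gradient with the Lebesgue-form integral
  have hveq : (∫ δ, F (x + δ) • ((σ ^ 2)⁻¹ • δ) ∂(isoGaussian d σ))
      = ∫ y : EuclideanSpace ℝ (Fin d),
          (F y * gaussDensity d σ (y - x) * (σ ^ 2)⁻¹) • (y - x) := by
    rw [isoGaussian_integral_eq]
    rw [← integral_add_left_eq_self
      (fun y : EuclideanSpace ℝ (Fin d) =>
        (F y * gaussDensity d σ (y - x) * (σ ^ 2)⁻¹) • (y - x)) x]
    congr 1
    funext δ
    simp only [add_sub_cancel_left]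
    rw [smul_smul, smul_smul]
    congr 1
    ring
  -- identify the derivative
  have hderiv_eq : (∫ y : EuclideanSpace ℝ (Fin d), steinDeriv d σ F x y)
      = (toDual ℝ (EuclideanSpace ℝ (Fin d)))
        (∫ δ, F (x + δ) • ((σ ^ 2)⁻¹ • δ) ∂(isoGaussian d σ)) := by
    apply ContinuousLinearMap.ext
    intro h
    rw [ContinuousLinearMap.integral_apply hΦ'int h]
    have hrhs : (toDual ℝ (EuclideanSpace ℝ (Fin d)))
        (∫ δ, F (x + δ) • ((σ ^ 2)⁻¹ • δ) ∂(isoGaussian d σ)) h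
        = ∫ y : EuclideanSpace ℝ (Fin d),
            inner ℝ ((F y * gaussDensity d σ (y - x) * (σ ^ 2)⁻¹) • (y - x)) h := by
      rw [toDual_apply_apply, hveq, real_inner_comm, ← integral_inner hwint h]
      congr 1
      ext y
      rw [real_inner_comm]
    rw [hrhs]
    apply integral_congr_ae
    apply Filter.Eventually.of_forall
    intro y
    simp only [steinDeriv, ContinuousLinearMap.smul_apply, toDual_apply_apply, smul_eq_mul]
    rw [real_inner_smul_left]
  rw [← hderiv_eq]
  exact key
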